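/- Let f : ℝ → ℝ be six times continuously differentiable, x₀ ∈ ℝ, and r ∈ ℝ fixed. For H > 0 set U_k = f(x₀ + kH) and define D_H(f) = (1/H)·[ μδU + rδ²U − (1/6 − r²/2)μδ³U − r(1/12 − r²/6)δ⁴U ], with the central difference operators on the five values U_{−2},…,U_2. Then D_H(f) = f′(x₀ + rH) + O(H⁴) as H → 0. -/

import Mathlib

open Real Asymptotics Filter Topology

private lemma bigO_step {R R' : ℝ → ℝ} (hR : ∀ t, HasDerivAt R (R' t) t)
    (h0 : R 0 = 0) {n : ℕ} (h : R' =O[𝓝 (0:ℝ)] fun h => h ^ n) :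
    R =O[𝓝 (0:ℝ)] fun h => h ^ (n + 1) := by
  obtain ⟨C, hC⟩ := h.isBigOWith
  obtain ⟨ε, hε, hball⟩ := Metric.eventually_nhds_iff.mp hC.bound
  rw [isBigO_iff]
  refine ⟨max C 0, ?_⟩
  filter_upwards [Metric.ball_mem_nhds (0:ℝ) hε] with x hx
  have hxε : |x| < ε := by simpa [Real.dist_eq] using hx
  have habs : ∀ t ∈ Set.uIcc (0:ℝ) x, |t| ≤ |x| := by
    intro t ht
    rcases le_total 0 x with hx0 | hx0
    · rw [Set.uIcc_of_le hx0] at ht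
      rw [abs_of_nonneg ht.1, abs_of_nonneg hx0]; exact ht.2
    · rw [Set.uIcc_of_ge hx0] at ht
      rw [abs_of_nonpos ht.2, abs_of_nonpos hx0]; linarith [ht.1]
  have key : ‖R x - R 0‖ ≤ (max C 0 * |x| ^ n) * ‖x - 0‖ := by
    refine Convex.norm_image_sub_le_of_norm_hasDerivWithin_le
      (f' := R') (fun t ht => (hR t).hasDerivWithinAt) ?_ (convex_uIcc 0 x)
      Set.left_mem_uIcc Set.right_mem_uIcc
    intro t ht
    have hb : ‖R' t‖ ≤ C * ‖t ^ n‖ := by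
      refine hball ?_
      rw [Real.dist_eq, sub_zero]
      exact lt_of_le_of_lt (habs t ht) hxε
    calc ‖R' t‖ ≤ C * ‖t ^ n‖ := hb
      _ ≤ max C 0 * |t| ^ n := by
          rw [norm_pow, Real.norm_eq_abs]
          exact mul_le_mul_of_nonneg_right (le_max_left _ _) (by positivity)
      _ ≤ max C 0 * |x| ^ n := by
          exact mul_le_mul_of_nonneg_left
            (pow_le_pow_left₀ (abs_nonneg t) (habs t ht) n) (le_max_right _ _)
  rw [h0, sub_zero, sub_zero] at key
  calc ‖R x‖ ≤ max C 0 * |x| ^ n * ‖x‖ := key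
    _ = max C 0 * ‖x ^ (n+1)‖ := by
        rw [norm_pow, Real.norm_eq_abs, pow_succ]; ring

private lemma taylor_bigO : ∀ (n : ℕ) (f : ℝ → ℝ), ContDiff ℝ n f →
    (fun h : ℝ => f h - ∑ i ∈ Finset.range (n + 1),
      iteratedDeriv i f 0 * h ^ i / (Nat.factorial i)) =O[𝓝 (0:ℝ)] fun h => h ^ n := by
  intro n
  induction n with
  | zero =>
    intro f hf
    have ht : Tendsto (fun h : ℝ => f h - ∑ i ∈ Finset.range 1,
        iteratedDeriv i f 0 * h ^ i / (Nat.factorial i)) (𝓝 0) (𝓝 0) := by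
      simp only [Finset.sum_range_one, iteratedDeriv_zero, pow_zero, Nat.factorial_zero,
        Nat.cast_one, mul_one, div_one]
      have := (hf.continuous.tendsto 0).sub (tendsto_const_nhds (x := f 0))
      simpa using this
    have h1 := ht.isBigO_one ℝ
    refine h1.trans ?_
    simp only [pow_zero]
    exact isBigO_refl _ _
  | succ n ih =>
    intro f hf
    have hfd : Differentiable ℝ f := hf.differentiable (by simp)
    have hf' : ContDiff ℝ ((n : ℕ∞) + 1) f := by exact_mod_cast hf
    have hg : ContDiff ℝ n (deriv f) := by exact_mod_cast (contDiff_succ_iff_deriv.mp hf').2.2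
    have IH := ih (deriv f) hg
    refine bigO_step (R' := fun t => deriv f t - ∑ i ∈ Finset.range (n + 1),
        iteratedDeriv i (deriv f) 0 * t ^ i / (Nat.factorial i)) ?_ ?_ IH
    · intro t
      have hsum : HasDerivAt (fun h : ℝ => ∑ i ∈ Finset.range (n + 2),
          iteratedDeriv i f 0 * h ^ i / (Nat.factorial i))
          (∑ i ∈ Finset.range (n + 2),
            iteratedDeriv i f 0 * ((i : ℝ) * t ^ (i - 1)) / (Nat.factorial i)) t := by
        apply HasDerivAt.fun_sum
        intro i _
        exact ((hasDerivAt_pow i t).const_mul (iteratedDeriv i f 0)).div_const _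
      have hd : (∑ i ∈ Finset.range (n + 2),
            iteratedDeriv i f 0 * ((i : ℝ) * t ^ (i - 1)) / (Nat.factorial i))
          = ∑ i ∈ Finset.range (n + 1),
            iteratedDeriv i (deriv f) 0 * t ^ i / (Nat.factorial i) := by
        rw [Finset.sum_range_succ']
        simp only [Nat.cast_zero, zero_mul, mul_zero, zero_div, add_zero]
        refine Finset.sum_congr rfl fun i _ => ?_
        rw [← iteratedDeriv_succ']
        have h1 : ((Nat.factorial (i + 1)) : ℝ) = (i + 1) * (Nat.factorial i) := by
          push_cast [Nat.factorial_succ]; ring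
        have h2 : ((Nat.factorial i) : ℝ) ≠ 0 := Nat.cast_ne_zero.mpr (Nat.factorial_ne_zero i)
        have h3 : ((i : ℝ) + 1) ≠ 0 := by positivity
        rw [h1]
        rw [Nat.add_sub_cancel]
        field_simp
        push_cast
        ring
      exact ((hfd t).hasDerivAt.sub (hd ▸ hsum))
    · simp [Finset.sum_range_succ']

private lemma taylor_shift (n : ℕ) (f : ℝ → ℝ) (hf : ContDiff ℝ n f) (x₀ c : ℝ) :
    (fun H : ℝ => f (x₀ + c * H) - ∑ i ∈ Finset.range (n + 1),
      c ^ i * iteratedDeriv i f x₀ * H ^ i / (Nat.factorial i)) =O[𝓝 (0:ℝ)] fun H => H ^ n := by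
  have h1 : ContDiff ℝ n (fun h : ℝ => f (x₀ + h)) :=
    hf.comp (contDiff_const.add contDiff_id)
  have h2 : ContDiff ℝ n (fun H : ℝ => f (x₀ + c * H)) :=
    h1.comp (contDiff_const.mul contDiff_id)
  have h3 := taylor_bigO n (fun H : ℝ => f (x₀ + c * H)) h2
  refine h3.congr_left fun H => ?_
  congr 1
  refine Finset.sum_congr rfl fun i hi => ?_
  have hcd : ContDiff ℝ i (fun h : ℝ => f (x₀ + h)) :=
    h1.of_le (by exact_mod_cast Nat.lt_succ_iff.mp (Finset.mem_range.mp hi))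
  have e1 : iteratedDeriv i (fun H : ℝ => f (x₀ + c * H)) 0
      = c ^ i * iteratedDeriv i (fun h : ℝ => f (x₀ + h)) (c * 0) :=
    congrFun (iteratedDeriv_comp_const_mul hcd c) 0
  rw [e1, iteratedDeriv_comp_const_add]
  simp

set_option maxHeartbeats 3000000 in
theorem neumann_tbc_fourth_order_consistency
    (f : ℝ → ℝ) (hf : ContDiff ℝ 6 f) (x₀ r : ℝ) :
    (fun H : ℝ =>
        (1 / H) *
            (((f (x₀ + H) - f (x₀ - H)) / 2)
              + r * (f (x₀ + H) - 2 * f x₀ + f (x₀ - H))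
              - (1 / 6 - r ^ 2 / 2) *
                  ((f (x₀ + 2 * H) - 2 * f (x₀ + H) + 2 * f (x₀ - H) - f (x₀ - 2 * H)) / 2)
              - r * (1 / 12 - r ^ 2 / 6) *
                  (f (x₀ + 2 * H) - 4 * f (x₀ + H) + 6 * f x₀ - 4 * f (x₀ - H)
                    + f (x₀ - 2 * H)))
          - deriv f (x₀ + r * H))
      =O[nhdsWithin 0 (Set.Ioi 0)] fun H : ℝ => H ^ 4 := by
  set l : Filter ℝ := nhdsWithin 0 (Set.Ioi 0) with hl
  have hle : l ≤ 𝓝 (0:ℝ) := nhdsWithin_le_nhds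
  have hf5 : ContDiff ℝ 5 f := hf.of_le (by norm_num)
  have hf6' : ContDiff ℝ ((5 : ℕ∞) + 1) f := by norm_num; exact_mod_cast hf
  have hg5 : ContDiff ℝ 5 (deriv f) := by
    exact_mod_cast (contDiff_succ_iff_deriv.mp hf6').2.2
  have hg4 : ContDiff ℝ 4 (deriv f) := hg5.of_le (by norm_num)
  have h1 := taylor_shift 5 f hf5 x₀ 1
  have hm1 := taylor_shift 5 f hf5 x₀ (-1)
  have h2 := taylor_shift 5 f hf5 x₀ 2
  have hm2 := taylor_shift 5 f hf5 x₀ (-2)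
  have hv := (taylor_shift 4 (deriv f) hg4 x₀ r).mono hle
  have hpow : (fun H : ℝ => H ^ 5 * (1 / H)) =O[l] fun H : ℝ => H ^ 4 := by
    refine Filter.EventuallyEq.isBigO ?_
    filter_upwards [self_mem_nhdsWithin] with H hH
    have : H ≠ 0 := ne_of_gt hH
    field_simp
  have hdiv : ∀ (ρ : ℝ → ℝ), (ρ =O[𝓝 (0:ℝ)] fun H => H ^ 5) →
      (fun H => ρ H * (1 / H)) =O[l] fun H : ℝ => H ^ 4 := by
    intro ρ hρ
    exact ((hρ.mono hle).mul (isBigO_refl (fun H : ℝ => 1 / H) l)).trans hpow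
  have hq1 := hdiv _ h1
  have hqm1 := hdiv _ hm1
  have hq2 := hdiv _ h2
  have hqm2 := hdiv _ hm2
  have hG := ((((hq1.const_mul_left (2/3 + 4*r/3 - r^2/2 - 2*r^3/3)).add
      (hqm1.const_mul_left (-2/3 + 4*r/3 + r^2/2 - 2*r^3/3))).add
      ((hq2.const_mul_left (-1/12 - r/12 + r^2/4 + r^3/6)).add
      (hqm2.const_mul_left (1/12 - r/12 - r^2/4 + r^3/6)))).sub hv).add
      ((isBigO_refl (fun H : ℝ => H ^ 4) l).const_mul_left
        (iteratedDeriv 5 f x₀ * (-(1/30) + r^2/8 - r^4/24)))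
  refine Filter.EventuallyEq.trans_isBigO ?_ hG
  filter_upwards [self_mem_nhdsWithin] with H hH
  have hH0 : H ≠ 0 := ne_of_gt hH
  have e1 : x₀ + H = x₀ + 1 * H := by ring
  have e2 : x₀ - H = x₀ + (-1) * H := by ring
  have e3 : x₀ - 2 * H = x₀ + (-2) * H := by ring
  rw [e1, e2, e3]
  simp only [Finset.sum_range_succ, Finset.sum_range_zero, iteratedDeriv_zero,
    ← iteratedDeriv_succ']
  norm_num [Nat.factorial]
  field_simp
  ring
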